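/- Let A ⊂ ℝ be a finite alphabet and 𝒲 a linearly repetitive language over A. Fix E ∈ ℂ. Then there exists γ(E) ∈ ℝ such that for every sequence (w_n) in 𝒲 with |w_n| → ∞, the limit lim_{n→∞} (1/|w_n|)·ln‖M(E)(w_n)‖ exists and equals γ(E) (in particular it is independent of the sequence). -/

import Mathlib

open Filter
open scoped Matrix.Norms.L2Operator

noncomputable section

/-- The one-step transfer matrix `T(E,a)`. -/
def transferMat (E : ℂ) (x : ℝ) : Matrix (Fin 2) (Fin 2) ℂ :=
  !![E - (x : ℂ), -1; 1, 0]

/-- The transfer matrix `M(E)(w) = T(E,w_n) ⋯ T(E,w_1)` over a word `w = w_1 ⋯ w_n`. -/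
def transferProd (E : ℂ) (w : List ℝ) : Matrix (Fin 2) (Fin 2) ℂ :=
  (w.reverse.map (transferMat E)).prod

/-- The operator norm of a `2 × 2` complex matrix (acting on Euclidean `ℂ²`). -/
def opNorm (M : Matrix (Fin 2) (Fin 2) ℂ) : ℝ :=
  ‖LinearMap.toContinuousLinearMap (Matrix.toEuclideanLin M)‖

lemma opNorm_eq (M : Matrix (Fin 2) (Fin 2) ℂ) : opNorm M = ‖M‖ := rfl

/-- Explicit inverse of the transfer matrix. -/
def invMat (E : ℂ) (x : ℝ) : Matrix (Fin 2) (Fin 2) ℂ := !![0, 1; -1, E - (x:ℂ)]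

/-- Product of inverses. -/
def invProd (E : ℂ) (w : List ℝ) : Matrix (Fin 2) (Fin 2) ℂ := (w.map (invMat E)).prod

lemma transferMat_mul_invMat (E : ℂ) (x : ℝ) : transferMat E x * invMat E x = 1 := by
  ext i j
  fin_cases i <;> fin_cases j <;>
    simp [transferMat, invMat, Matrix.mul_apply, Fin.sum_univ_two, Matrix.one_apply]

lemma transferProd_nil (E : ℂ) : transferProd E [] = 1 := rfl

lemma transferProd_cons (E : ℂ) (x : ℝ) (w : List ℝ) :
    transferProd E (x :: w) = transferProd E w * transferMat E x := by
  simp [transferProd, List.reverse_cons]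

lemma transferProd_append (E : ℂ) (u v : List ℝ) :
    transferProd E (u ++ v) = transferProd E v * transferProd E u := by
  simp [transferProd, List.reverse_append]

lemma transferProd_mul_invProd (E : ℂ) (w : List ℝ) :
    transferProd E w * invProd E w = 1 := by
  induction w with
  | nil => simp [transferProd_nil, invProd]
  | cons x w ih =>
    rw [transferProd_cons, invProd, List.map_cons, List.prod_cons, mul_assoc,
      ← mul_assoc (transferMat E x), transferMat_mul_invMat, one_mul]
    exact ih

lemma norm_transferProd_pos (E : ℂ) (w : List ℝ) : 0 < ‖transferProd E w‖ := by
  by_contra h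
  push_neg at h
  have h0 : ‖transferProd E w‖ = 0 := le_antisymm h (norm_nonneg _)
  have h1 : (1:ℝ) = ‖transferProd E w * invProd E w‖ := by
    rw [transferProd_mul_invProd]; exact (CStarRing.norm_one).symm
  have h2 := h1.le.trans (norm_mul_le _ _)
  rw [h0, zero_mul] at h2
  linarith

lemma norm_invProd_le (E : ℂ) (K : ℝ) (hK : 1 ≤ K) (w : List ℝ)
    (h : ∀ x ∈ w, ‖invMat E x‖ ≤ K) : ‖invProd E w‖ ≤ K ^ w.length := by
  induction w with
  | nil => simpa [invProd] using CStarRing.norm_one.le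
  | cons x w ih =>
    have h1 : ‖invMat E x‖ ≤ K := h x (by simp)
    have h2 : ‖invProd E w‖ ≤ K ^ w.length := ih fun y hy => h y (by simp [hy])
    calc ‖invProd E (x :: w)‖ ≤ ‖invMat E x‖ * ‖invProd E w‖ := by
          rw [invProd, List.map_cons, List.prod_cons]; exact norm_mul_le _ _
      _ ≤ K * K ^ w.length :=
          mul_le_mul h1 h2 (norm_nonneg _) (le_trans zero_le_one hK)
      _ = K ^ (x :: w).length := by rw [List.length_cons]; ring

lemma norm_transferProd_le (E : ℂ) (K : ℝ) (hK : 1 ≤ K) (w : List ℝ)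
    (h : ∀ x ∈ w, ‖transferMat E x‖ ≤ K) : ‖transferProd E w‖ ≤ K ^ w.length := by
  induction w with
  | nil => simpa [transferProd_nil] using CStarRing.norm_one.le
  | cons x w ih =>
    have h1 : ‖transferMat E x‖ ≤ K := h x (by simp)
    have h2 : ‖transferProd E w‖ ≤ K ^ w.length := ih fun y hy => h y (by simp [hy])
    calc ‖transferProd E (x :: w)‖ ≤ ‖transferProd E w‖ * ‖transferMat E x‖ := by
          rw [transferProd_cons]; exact norm_mul_le _ _
      _ ≤ K ^ w.length * K :=
          mul_le_mul h2 h1 (norm_nonneg _) (pow_nonneg (le_trans zero_le_one hK) _)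
      _ = K ^ (x :: w).length := by rw [List.length_cons]; ring

lemma norm_transferProd_ge (E : ℂ) (K : ℝ) (hK : 1 ≤ K) (w : List ℝ)
    (h : ∀ x ∈ w, ‖invMat E x‖ ≤ K) : (K ^ w.length)⁻¹ ≤ ‖transferProd E w‖ := by
  have hKpos : (0:ℝ) < K ^ w.length := pow_pos (lt_of_lt_of_le one_pos hK) _
  have h1 : (1:ℝ) ≤ ‖transferProd E w‖ * ‖invProd E w‖ := by
    calc (1:ℝ) = ‖transferProd E w * invProd E w‖ := by
          rw [transferProd_mul_invProd]; exact (CStarRing.norm_one).symm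
      _ ≤ _ := norm_mul_le _ _
  have h2 := norm_invProd_le E K hK w h
  rw [inv_le_iff_one_le_mul₀ hKpos]
  calc (1:ℝ) ≤ ‖transferProd E w‖ * ‖invProd E w‖ := h1
    _ ≤ ‖transferProd E w‖ * K ^ w.length :=
        mul_le_mul_of_nonneg_left h2 (norm_nonneg _)

/-- The log of the norm of the transfer matrix product. -/
def logNorm (E : ℂ) (v : List ℝ) : ℝ := Real.log ‖transferProd E v‖

lemma logNorm_subadd (E : ℂ) (u v : List ℝ) :
    logNorm E (u ++ v) ≤ logNorm E u + logNorm E v := by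
  unfold logNorm
  rw [← Real.log_mul (ne_of_gt (norm_transferProd_pos E u))
    (ne_of_gt (norm_transferProd_pos E v))]
  apply Real.log_le_log (norm_transferProd_pos E (u ++ v))
  rw [transferProd_append]
  exact (norm_mul_le _ _).trans (le_of_eq (mul_comm _ _))

lemma logNorm_nil (E : ℂ) : logNorm E [] = 0 := by
  unfold logNorm
  rw [transferProd_nil, CStarRing.norm_one, Real.log_one]

lemma logNorm_le (E : ℂ) (K : ℝ) (hK : 1 ≤ K) (w : List ℝ)
    (h : ∀ x ∈ w, ‖transferMat E x‖ ≤ K) : logNorm E w ≤ w.length * Real.log K := by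
  have := Real.log_le_log (norm_transferProd_pos E w) (norm_transferProd_le E K hK w h)
  rwa [Real.log_pow] at this

lemma logNorm_ge (E : ℂ) (K : ℝ) (hK : 1 ≤ K) (w : List ℝ)
    (h : ∀ x ∈ w, ‖invMat E x‖ ≤ K) : -(w.length * Real.log K) ≤ logNorm E w := by
  have hKpos : (0:ℝ) < K ^ w.length := pow_pos (lt_of_lt_of_le one_pos hK) _
  have := Real.log_le_log (by positivity) (norm_transferProd_ge E K hK w h)
  rwa [Real.log_inv, Real.log_pow] at this


set_option maxHeartbeats 1000000 in
/-- Theorem 5.2, existence of the Lyapunov exponent. Let `A ⊂ ℝ` be a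
finite alphabet and `W` a factorial, linearly repetitive language over `A` containing
words of every length. Then for every `E ∈ ℂ` there is `γ(E) ∈ ℝ` such that
`(1/|w_n|)·ln‖M(E)(w_n)‖ → γ(E)` along every sequence `(w_n)` in `W` with
`|w_n| → ∞`. -/
theorem lyapunov_exists (A : Finset ℝ) (W : Set (List ℝ))
    (hA : ∀ w ∈ W, ∀ x ∈ w, x ∈ A)
    (hfactorial : ∀ u w : List ℝ, w ∈ W → u <:+: w → u ∈ W)
    (hlengths : ∀ n : ℕ, ∃ w ∈ W, w.length = n)
    (hlr : ∃ c : ℝ, 1 ≤ c ∧ ∀ u ∈ W, u ≠ [] → ∀ w ∈ W,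
      c * (u.length : ℝ) ≤ (w.length : ℝ) → u <:+: w)
    (E : ℂ) :
    ∃ γ : ℝ, ∀ w : ℕ → List ℝ, (∀ n, w n ∈ W) →
      Tendsto (fun n => (w n).length) atTop atTop →
      Tendsto (fun n => Real.log (opNorm (transferProd E (w n))) / ((w n).length : ℝ))
        atTop (nhds γ) := by
  obtain ⟨c, hc1, hlr⟩ := hlr
  have hc0 : (0:ℝ) < c := lt_of_lt_of_le one_pos hc1
  -- a uniform bound on the norms of the one-step matrices and their inverses
  obtain ⟨K0, hK0⟩ : ∃ K0, ∀ y ∈ (fun x => max ‖transferMat E x‖ ‖invMat E x‖) '' (A : Set ℝ),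
      y ≤ K0 := (A.finite_toSet.image _).bddAbove
  set K : ℝ := max K0 1 with hKdef
  have hK1 : 1 ≤ K := le_max_right _ _
  have hKT : ∀ v ∈ W, ∀ x ∈ v, ‖transferMat E x‖ ≤ K := by
    intro v hv x hx
    have := hK0 _ ⟨x, hA v hv x hx, rfl⟩
    exact le_trans (le_trans (le_max_left _ _) this) (le_max_left _ _)
  have hKI : ∀ v ∈ W, ∀ x ∈ v, ‖invMat E x‖ ≤ K := by
    intro v hv x hx
    have := hK0 _ ⟨x, hA v hv x hx, rfl⟩
    exact le_trans (le_trans (le_max_right _ _) this) (le_max_left _ _)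
  set R : ℝ := Real.log K with hRdef
  have hR0 : 0 ≤ R := Real.log_nonneg hK1
  have hFub : ∀ v ∈ W, logNorm E v ≤ v.length * R := fun v hv =>
    logNorm_le E K hK1 v (hKT v hv)
  have hFlb : ∀ v ∈ W, -((v.length : ℝ) * R) ≤ logNorm E v := fun v hv =>
    logNorm_ge E K hK1 v (hKI v hv)
  -- maximizing words of each length
  have hmax : ∀ n : ℕ, ∃ v, (v ∈ W ∧ v.length = n) ∧
      ∀ u ∈ W, u.length = n → logNorm E u ≤ logNorm E v := by
    intro n
    have hfin : {v | v ∈ W ∧ v.length = n}.Finite := by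
      have hfin2 : {l : List {x // x ∈ A} | l.length = n}.Finite := List.finite_length_eq _ n
      apply Set.Finite.subset (hfin2.image (fun l => l.map Subtype.val))
      rintro v ⟨hvW, hvlen⟩
      refine ⟨v.attach.map (fun x => (⟨x.1, hA v hvW x.1 x.2⟩ : {x // x ∈ A})),
        by simp [hvlen], ?_⟩
      simp [List.map_map, Function.comp]
    have hne : {v | v ∈ W ∧ v.length = n}.Nonempty := by
      obtain ⟨v, hv, hvl⟩ := hlengths n
      exact ⟨v, hv, hvl⟩
    obtain ⟨v, hv, hvmax⟩ := Set.exists_max_image _ (logNorm E) hfin hne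
    exact ⟨v, hv, fun u hu hul => hvmax u ⟨hu, hul⟩⟩
  choose mx hmx hmxmax using hmax
  have hmxW : ∀ n, mx n ∈ W := fun n => (hmx n).1
  have hmxlen : ∀ n, (mx n).length = n := fun n => (hmx n).2
  set a : ℕ → ℝ := fun n => logNorm E (mx n) with hadef
  have hFle : ∀ v ∈ W, logNorm E v ≤ a v.length := fun v hv => hmxmax _ v hv rfl
  have ha0 : a 0 = 0 := by
    have h0 : mx 0 = [] := List.length_eq_zero_iff.mp (hmxlen 0)
    simp [hadef, h0, logNorm_nil]
  have haub : ∀ n, a n ≤ n * R := by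
    intro n
    have := hFub (mx n) (hmxW n); rwa [hmxlen n] at this
  have halb : ∀ n : ℕ, -((n:ℝ) * R) ≤ a n := by
    intro n
    have := hFlb (mx n) (hmxW n); rwa [hmxlen n] at this
  have hsub : Subadditive a := by
    intro m n
    have hv := hmxW (m + n)
    have hl := hmxlen (m + n)
    have htake : (mx (m+n)).take m ∈ W := hfactorial _ _ hv (List.take_prefix m _).isInfix
    have hdrop : (mx (m+n)).drop m ∈ W := hfactorial _ _ hv (List.drop_suffix m _).isInfix
    have h1 : ((mx (m+n)).take m).length = m := by
      simp [List.length_take, hl]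
    have h2 : ((mx (m+n)).drop m).length = n := by
      simp [List.length_drop, hl]
    calc a (m+n) = logNorm E ((mx (m+n)).take m ++ (mx (m+n)).drop m) := by
          rw [List.take_append_drop]
      _ ≤ logNorm E ((mx (m+n)).take m) + logNorm E ((mx (m+n)).drop m) :=
          logNorm_subadd E _ _
      _ ≤ a m + a n := by
          have := hFle _ htake; rw [h1] at this
          have h2' := hFle _ hdrop; rw [h2] at h2'
          exact add_le_add this h2'
  have hbdd : BddBelow (Set.range fun n : ℕ => a n / n) := by
    refine ⟨-R, ?_⟩
    rintro x ⟨n, rfl⟩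
    rcases Nat.eq_zero_or_pos n with h | h
    · simp [h, ha0, hR0]
    · have hnpos : (0:ℝ) < n := by exact_mod_cast h
      rw [le_div_iff₀ hnpos]
      have := halb n
      nlinarith
  set γ : ℝ := hsub.lim with hγdef
  have htend : Tendsto (fun n => a n / n) atTop (nhds γ) := hsub.tendsto_lim hbdd
  have hγle : ∀ n : ℕ, n ≠ 0 → γ * n ≤ a n := by
    intro n hn
    have h := hsub.lim_le_div hbdd hn
    have hnpos : (0:ℝ) < n := by
      have : 0 < n := Nat.pos_of_ne_zero hn
      exact_mod_cast this
    rw [le_div_iff₀ hnpos] at h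
    exact h
  -- the key uniform estimate
  have key : ∀ ε > (0:ℝ), ∃ N₀ : ℕ, 1 ≤ N₀ ∧ ∀ v ∈ W, N₀ ≤ v.length →
      |logNorm E v / v.length - γ| ≤ ε := by
    intro ε hε
    set δ : ℝ := ε / (8 * c) with hδdef
    have hδ0 : 0 < δ := by positivity
    have hδε : δ ≤ ε := by
      rw [hδdef, div_le_iff₀ (by positivity)]
      nlinarith
    obtain ⟨n₁, hn₁⟩ := Metric.tendsto_atTop.mp htend δ hδ0
    set n₂ : ℕ := max n₁ 1 with hn₂def
    set C : ℝ := (R + |γ|) * n₂ with hCdef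
    have hC0 : 0 ≤ C := by positivity
    have hAm : ∀ m : ℕ, a m ≤ γ * m + δ * m + C := by
      intro m
      rcases le_or_gt n₂ m with h | h
      · have h1 := hn₁ m (le_trans (le_max_left _ _) h)
        rw [Real.dist_eq, abs_lt] at h1
        have hm1 : (1:ℝ) ≤ m := by exact_mod_cast le_trans (le_max_right _ _) h
        have hmpos : (0:ℝ) < m := by linarith
        have h2 : a m / m < γ + δ := by linarith [h1.2]
        rw [div_lt_iff₀ hmpos] at h2
        nlinarith
      · have hub := haub m
        have hmn : (m:ℝ) ≤ n₂ := by exact_mod_cast h.le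
        have h2 : -(γ * m) ≤ |γ| * m := by
          have h3 := neg_abs_le γ
          have h4 : (0:ℝ) ≤ m := Nat.cast_nonneg m
          nlinarith
        have h5 : (0:ℝ) ≤ δ * m := by positivity
        have h6 : (0:ℝ) ≤ |γ| := abs_nonneg γ
        nlinarith
    obtain ⟨N', hN'⟩ := exists_nat_ge (8 * (δ + C) / ε)
    set N₀ : ℕ := max (max N' n₂) 1 with hN₀def
    refine ⟨N₀, le_max_right _ _, ?_⟩
    intro v hvW hvlen
    have hN1 : 1 ≤ v.length := le_trans (le_max_right _ _) hvlen
    have hNpos : (0:ℝ) < v.length := by exact_mod_cast hN1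
    have hNn₂ : n₂ ≤ v.length := le_trans (le_trans (le_max_right _ _) (le_max_left _ _)) hvlen
    have hNN' : (8 * (δ + C) / ε) ≤ v.length := by
      refine le_trans hN' ?_
      exact_mod_cast le_trans (le_trans (le_max_left _ _) (le_max_left _ _)) hvlen
    -- upper bound
    have hupper : logNorm E v / v.length - γ ≤ ε := by
      have h1 := hn₁ v.length (le_trans (le_max_left _ _) hNn₂)
      rw [Real.dist_eq, abs_lt] at h1
      have h2 : logNorm E v ≤ a v.length := hFle v hvW
      have h3 : logNorm E v / v.length ≤ a v.length / v.length := by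
        apply div_le_div_of_nonneg_right h2 hNpos.le
      have h4 : a v.length / v.length - γ < δ := h1.2
      linarith
    -- lower bound
    have hvne : v ≠ [] := by
      intro h
      rw [h] at hN1
      simp at hN1
    set L : ℕ := ⌈c * v.length⌉₊ with hLdef
    have hL1 : (c * v.length : ℝ) ≤ L := Nat.le_ceil _
    have hL2 : (L : ℝ) ≤ c * v.length + 1 := le_of_lt (Nat.ceil_lt_add_one (by positivity))
    have hNL : v.length ≤ L := by
      have h1 : (v.length : ℝ) ≤ c * v.length := by nlinarith
      exact_mod_cast le_trans h1 hL1
    have hL1' : 1 ≤ L := le_trans hN1 hNL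
    set H : ℝ := δ * L + C with hHdef
    have hH0 : 0 ≤ H := by positivity
    have hHa : ∀ m : ℕ, m ≤ L → a m ≤ γ * m + H := by
      intro m hm
      have h1 := hAm m
      have h2 : (m:ℝ) ≤ L := by exact_mod_cast hm
      nlinarith
    have claim : ∀ n : ℕ, ∀ u, u ∈ W → u.length = n →
        ∃ k : ℕ, u.length ≤ (k+1) * L ∧ k * v.length ≤ u.length ∧
          logNorm E u ≤ (k:ℝ) * logNorm E v + γ * ((u.length : ℝ) - (k:ℝ) * (v.length:ℝ)) + ((k:ℝ)+1) * H := by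
      intro n
      induction n using Nat.strong_induction_on with
      | _ n ih =>
        intro u huW hulen
        rcases lt_or_ge u.length L with hsmall | hbig
        · refine ⟨0, by simpa using hsmall.le, by simp, ?_⟩
          have h1 := hFle u huW
          have h2 := hHa u.length hsmall.le
          push_cast
          simp only [zero_mul, mul_zero, sub_zero, zero_add, one_mul]
          linarith
        · have htakeW : u.take L ∈ W := hfactorial _ _ huW (List.take_prefix L u).isInfix
          have htlen : (u.take L).length = L := by
            simp [List.length_take, min_eq_left hbig]
          have hvinf : v <:+: u.take L := by
            apply hlr v hvW hvne _ htakeW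
            rw [htlen]; exact hL1
          obtain ⟨p, s, hps⟩ := hvinf
          set r : List ℝ := s ++ u.drop L with hrdef
          have hueq : u = p ++ (v ++ r) := by
            conv_lhs => rw [← List.take_append_drop L u, ← hps]
            simp [List.append_assoc, hrdef]
          have hpW : p ∈ W := by
            apply hfactorial _ _ huW
            exact ⟨[], v ++ r, by simpa using hueq.symm⟩
          have hrW : r ∈ W := by
            apply hfactorial _ _ huW
            exact ⟨p ++ v, [], by simp [hueq, List.append_assoc]⟩
          have hlen1 : p.length + (v.length + s.length) = L := by
            have := congrArg List.length hps
            simpa [htlen] using this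
          have hlenu : u.length = p.length + (v.length + r.length) := by
            rw [hueq]; simp
          have hrlt : r.length < n := by omega
          obtain ⟨k, hk1, hk2, hk3⟩ := ih r.length hrlt r hrW rfl
          refine ⟨k+1, ?_, ?_, ?_⟩
          · calc u.length = (p.length + v.length) + r.length := by omega
              _ ≤ L + (k+1) * L := Nat.add_le_add (by omega) hk1
              _ = (k+1+1) * L := by ring
          · calc (k+1) * v.length = k * v.length + v.length := by ring
              _ ≤ r.length + v.length := Nat.add_le_add_right hk2 _
              _ ≤ u.length := by omega
          · have hFu : logNorm E u ≤ logNorm E p + (logNorm E v + logNorm E r) := by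
              rw [hueq]
              exact le_trans (logNorm_subadd E p (v ++ r))
                (add_le_add le_rfl (logNorm_subadd E v r))
            have hFp : logNorm E p ≤ γ * p.length + H := by
              refine le_trans (hFle p hpW) (hHa p.length (by omega))
            have hpr : (p.length : ℝ) + r.length = (u.length : ℝ) - v.length := by
              have h := hlenu
              push_cast [h]
              ring
            have hkey : γ * p.length + γ * ((r.length:ℝ) - k * v.length) =
                γ * ((u.length:ℝ) - (k+1) * v.length) := by
              linear_combination γ * hpr
            push_cast
            push_cast at hk3
            linarith
    -- apply the claim to a maximizer of length 2L
    obtain ⟨k, hk1, hk2, hk3⟩ := claim (2*L) (mx (2*L)) (hmxW _) (hmxlen _)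
    rw [hmxlen] at hk1 hk2 hk3
    have hk1' : 1 ≤ k := by
      rcases Nat.eq_zero_or_pos k with h | h
      · subst h; omega
      · exact h
    have hkpos : (0:ℝ) < k := by exact_mod_cast hk1'
    have hk1c : (1:ℝ) ≤ k := by exact_mod_cast hk1'
    have hγM : γ * (2*L : ℕ) ≤ a (2*L) := hγle (2*L) (by omega)
    have hamx : a (2*L) = logNorm E (mx (2*L)) := rfl
    rw [hamx] at hγM
    -- k * (γ * v.length - logNorm E v) ≤ (k+1) * H
    have h1 : (k:ℝ) * (γ * v.length - logNorm E v) ≤ ((k:ℝ)+1) * H := by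
      push_cast at hk3 hγM
      nlinarith [hγM, hk3]
    have h2 : ((k:ℝ)+1) * H ≤ 2 * k * H := by nlinarith
    have hFvlb : γ * v.length - 2 * H ≤ logNorm E v := by nlinarith
    have hlower : -ε ≤ logNorm E v / v.length - γ := by
      have hgoal : (γ - ε) * v.length ≤ logNorm E v := by
        have hδc : δ * c = ε / 8 := by
          rw [hδdef]; field_simp
        have hH' : H ≤ δ * (c * v.length + 1) + C := by
          rw [hHdef]
          have := hL2
          nlinarith
        have hεN : 8 * (δ + C) ≤ ε * v.length := by
          rw [div_le_iff₀ hε] at hNN'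
          linarith [hNN']
        nlinarith [hFvlb, hH', hδc, hεN, hδ0.le, hC0, hNpos.le]
      have h4 : γ - ε ≤ logNorm E v / v.length := by
        rw [le_div_iff₀ hNpos]; exact hgoal
      linarith
    exact abs_le.mpr ⟨by linarith, hupper⟩
  -- conclude for sequences
  refine ⟨γ, ?_⟩
  intro w hwW hlen
  show Tendsto (fun n => logNorm E (w n) / ((w n).length : ℝ)) atTop (nhds γ)
  rw [Metric.tendsto_atTop]
  intro ε hε
  obtain ⟨N₀, _, hN₀⟩ := key (ε/2) (by positivity)
  rw [tendsto_atTop] at hlen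
  have hev := hlen N₀
  rw [eventually_atTop] at hev
  obtain ⟨n₀, hn₀⟩ := hev
  refine ⟨n₀, fun n hn => ?_⟩
  have h := hN₀ (w n) (hwW n) (hn₀ n hn)
  rw [Real.dist_eq]
  exact lt_of_le_of_lt h (by linarith)


end
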